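/- For 0 < x < 1, the function x ↦ J₀(x)·(K(x) − E(x)) − x·J₁(x)·E(x) is differentiable with derivative (x³/(1 − x²))·J₀(x)·E(x); equivalently, ∫ (x³/(1−x²)) J₀(x) E(x) dx = J₀(x)(K(x) − E(x)) − x·J₁(x)·E(x). -/

import Mathlib

open Real

/-- The complete elliptic integral of the first kind,
`K(k) = ∫₀^{π/2} (1 − k² sin²θ)^{−1/2} dθ`. -/
noncomputable def ellipticK (k : ℝ) : ℝ :=
  ∫ θ in (0:ℝ)..(π / 2), (1 - k ^ 2 * Real.sin θ ^ 2) ^ (-(1:ℝ) / 2)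

/-- The complete elliptic integral of the second kind,
`E(k) = ∫₀^{π/2} (1 − k² sin²θ)^{1/2} dθ`. -/
noncomputable def ellipticE (k : ℝ) : ℝ :=
  ∫ θ in (0:ℝ)..(π / 2), (1 - k ^ 2 * Real.sin θ ^ 2) ^ ((1:ℝ) / 2)

/-- The Bessel function of the first kind of order 0, by Bessel's integral
`J₀(x) = (1/π)∫₀^π cos(x sin θ) dθ`. -/
noncomputable def besselJ0 (x : ℝ) : ℝ :=
  (1 / π) * ∫ θ in (0:ℝ)..π, Real.cos (x * Real.sin θ)

/-- The Bessel function of the first kind of order 1, by Bessel's integral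
`J₁(x) = (1/π)∫₀^π cos(θ − x sin θ) dθ`. -/
noncomputable def besselJ1 (x : ℝ) : ℝ :=
  (1 / π) * ∫ θ in (0:ℝ)..π, Real.cos (θ - x * Real.sin θ)

open intervalIntegral MeasureTheory

section Aux

lemma besselJ0_aux (x : ℝ) (hx : x ≠ 0) :
    ∫ θ in (0:ℝ)..π, Real.cos θ * Real.cos (x * Real.sin θ) = 0 := by
  have h : ∀ θ ∈ Set.uIcc (0:ℝ) π,
      HasDerivAt (fun θ => Real.sin (x * Real.sin θ) / x)
        (Real.cos θ * Real.cos (x * Real.sin θ)) θ := by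
    intro θ _
    have h1 : HasDerivAt (fun θ : ℝ => x * Real.sin θ) (x * Real.cos θ) θ :=
      (Real.hasDerivAt_sin θ).const_mul x
    have h2 := (h1.sin).div_const x
    refine h2.congr_deriv (Eq.symm ?_)
    field_simp
  have hint : IntervalIntegrable (fun θ => Real.cos θ * Real.cos (x * Real.sin θ))
      volume 0 π :=
    (Real.continuous_cos.mul (Real.continuous_cos.comp
      (continuous_const.mul Real.continuous_sin))).intervalIntegrable 0 π
  rw [intervalIntegral.integral_eq_sub_of_hasDerivAt h hint]
  simp

lemma hasDerivAt_besselJ0 (x : ℝ) (hx : x ≠ 0) :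
    HasDerivAt besselJ0 (-besselJ1 x) x := by
  have key : HasDerivAt (fun y => ∫ θ in (0:ℝ)..π, Real.cos (y * Real.sin θ))
      (∫ θ in (0:ℝ)..π, -(Real.sin θ * Real.sin (x * Real.sin θ))) x := by
    have := (intervalIntegral.hasDerivAt_integral_of_dominated_loc_of_deriv_le
      (F := fun y θ => Real.cos (y * Real.sin θ))
      (F' := fun y θ => -(Real.sin θ * Real.sin (y * Real.sin θ)))
      (x₀ := x) (a := 0) (b := π) (bound := fun _ => 1) (μ := volume)
      (s := Metric.ball x 1) (Metric.ball_mem_nhds x one_pos) ?_ ?_ ?_ ?_ ?_ ?_).2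
    · exact this
    · filter_upwards with y
      exact ((Real.continuous_cos.comp (continuous_const.mul
        Real.continuous_sin))).aestronglyMeasurable
    · exact (Real.continuous_cos.comp
        (continuous_const.mul Real.continuous_sin)).intervalIntegrable 0 π
    · exact ((Real.continuous_sin.mul (Real.continuous_sin.comp
        (continuous_const.mul Real.continuous_sin))).neg).aestronglyMeasurable
    · filter_upwards with θ _ y _
      have h1 : |Real.sin θ| ≤ 1 := Real.abs_sin_le_one θ
      have h2 : |Real.sin (y * Real.sin θ)| ≤ 1 := Real.abs_sin_le_one _
      calc ‖-(Real.sin θ * Real.sin (y * Real.sin θ))‖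
          = |Real.sin θ| * |Real.sin (y * Real.sin θ)| := by
            rw [norm_neg, Real.norm_eq_abs, abs_mul]
        _ ≤ 1 * 1 := mul_le_mul h1 h2 (abs_nonneg _) zero_le_one
        _ = 1 := by ring
    · exact intervalIntegrable_const
    · filter_upwards with θ _ y _
      have h1 : HasDerivAt (fun y : ℝ => y * Real.sin θ) (Real.sin θ) y := by
        simpa using (hasDerivAt_id y).mul_const (Real.sin θ)
      simpa [mul_comm] using h1.cos
  have hπ : (π:ℝ) ≠ 0 := Real.pi_ne_zero
  have := (key.const_mul (1/π))
  refine this.congr_deriv (Eq.symm ?_)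
  unfold besselJ1
  rw [intervalIntegral.integral_neg, mul_neg, neg_inj]
  congr 1
  have e1 : ∀ θ : ℝ, Real.cos (θ - x * Real.sin θ)
      = Real.cos θ * Real.cos (x * Real.sin θ) + Real.sin θ * Real.sin (x * Real.sin θ) := by
    intro θ; rw [Real.cos_sub]
  have i1 : IntervalIntegrable (fun θ => Real.cos θ * Real.cos (x * Real.sin θ)) volume 0 π :=
    (Real.continuous_cos.mul (Real.continuous_cos.comp
      (continuous_const.mul Real.continuous_sin))).intervalIntegrable 0 π
  have i2 : IntervalIntegrable (fun θ => Real.sin θ * Real.sin (x * Real.sin θ)) volume 0 π :=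
    (Real.continuous_sin.mul (Real.continuous_sin.comp
      (continuous_const.mul Real.continuous_sin))).intervalIntegrable 0 π
  calc (∫ θ in (0:ℝ)..π, Real.cos (θ - x * Real.sin θ))
      = ∫ θ in (0:ℝ)..π, (Real.cos θ * Real.cos (x * Real.sin θ)
          + Real.sin θ * Real.sin (x * Real.sin θ)) := by
        apply intervalIntegral.integral_congr; intro θ _; exact e1 θ
    _ = (∫ θ in (0:ℝ)..π, Real.cos θ * Real.cos (x * Real.sin θ))
          + ∫ θ in (0:ℝ)..π, Real.sin θ * Real.sin (x * Real.sin θ) :=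
        intervalIntegral.integral_add i1 i2
    _ = ∫ θ in (0:ℝ)..π, Real.sin θ * Real.sin (x * Real.sin θ) := by
        rw [besselJ0_aux x hx, zero_add]

lemma besselJ1_aux (x : ℝ) :
    ∫ θ in (0:ℝ)..π, Real.cos (θ - x * Real.sin θ) * (1 - x * Real.cos θ) = 0 := by
  have h : ∀ θ ∈ Set.uIcc (0:ℝ) π,
      HasDerivAt (fun θ => Real.sin (θ - x * Real.sin θ))
        (Real.cos (θ - x * Real.sin θ) * (1 - x * Real.cos θ)) θ := by
    intro θ _
    have h1 : HasDerivAt (fun θ : ℝ => θ - x * Real.sin θ) (1 - x * Real.cos θ) θ :=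
      (hasDerivAt_id θ).sub ((Real.hasDerivAt_sin θ).const_mul x)
    exact h1.sin
  have hint : IntervalIntegrable
      (fun θ => Real.cos (θ - x * Real.sin θ) * (1 - x * Real.cos θ)) volume 0 π := by
    apply Continuous.intervalIntegrable
    fun_prop
  rw [intervalIntegral.integral_eq_sub_of_hasDerivAt h hint]
  simp

lemma hasDerivAt_besselJ1 (x : ℝ) (hx : x ≠ 0) :
    HasDerivAt besselJ1 (besselJ0 x - besselJ1 x / x) x := by
  have key : HasDerivAt (fun y => ∫ θ in (0:ℝ)..π, Real.cos (θ - y * Real.sin θ))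
      (∫ θ in (0:ℝ)..π, Real.sin θ * Real.sin (θ - x * Real.sin θ)) x := by
    have := (intervalIntegral.hasDerivAt_integral_of_dominated_loc_of_deriv_le
      (F := fun y θ => Real.cos (θ - y * Real.sin θ))
      (F' := fun y θ => Real.sin θ * Real.sin (θ - y * Real.sin θ))
      (x₀ := x) (a := 0) (b := π) (bound := fun _ => 1) (μ := volume)
      (s := Metric.ball x 1) (Metric.ball_mem_nhds x one_pos) ?_ ?_ ?_ ?_ ?_ ?_).2
    · exact this
    · filter_upwards with y
      apply Continuous.aestronglyMeasurable; fun_prop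
    · apply Continuous.intervalIntegrable; fun_prop
    · apply Continuous.aestronglyMeasurable; fun_prop
    · filter_upwards with θ _ y _
      have h1 : |Real.sin θ| ≤ 1 := Real.abs_sin_le_one θ
      have h2 : |Real.sin (θ - y * Real.sin θ)| ≤ 1 := Real.abs_sin_le_one _
      calc ‖Real.sin θ * Real.sin (θ - y * Real.sin θ)‖
          = |Real.sin θ| * |Real.sin (θ - y * Real.sin θ)| := by
            rw [Real.norm_eq_abs, abs_mul]
        _ ≤ 1 * 1 := mul_le_mul h1 h2 (abs_nonneg _) zero_le_one
        _ = 1 := by ring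
    · exact intervalIntegrable_const
    · filter_upwards with θ _ y _
      have h1 : HasDerivAt (fun y : ℝ => θ - y * Real.sin θ) (-Real.sin θ) y := by
        exact (((hasDerivAt_id y).mul_const (Real.sin θ)).const_sub θ).congr_deriv (by simp)
      have := h1.cos
      refine this.congr_deriv ?_
      ring
  have := key.const_mul (1/π)
  refine this.congr_deriv (Eq.symm ?_)
  have e1 : ∀ θ : ℝ, Real.sin θ * Real.sin (θ - x * Real.sin θ)
      = Real.cos (x * Real.sin θ) - Real.cos (θ - x * Real.sin θ) / x
        + Real.cos (θ - x * Real.sin θ) * (1 - x * Real.cos θ) / x := by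
    intro θ
    have e : x * Real.sin θ = θ - (θ - x * Real.sin θ) := by ring
    rw [e, Real.cos_sub]
    field_simp
    ring
  have i1 : IntervalIntegrable (fun θ => Real.cos (x * Real.sin θ)) volume 0 π := by
    apply Continuous.intervalIntegrable; fun_prop
  have i2 : IntervalIntegrable (fun θ => Real.cos (θ - x * Real.sin θ) / x) volume 0 π := by
    apply Continuous.intervalIntegrable; fun_prop
  have i3 : IntervalIntegrable
      (fun θ => Real.cos (θ - x * Real.sin θ) * (1 - x * Real.cos θ) / x) volume 0 π := by
    apply Continuous.intervalIntegrable; fun_prop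
  have split : (∫ θ in (0:ℝ)..π, Real.sin θ * Real.sin (θ - x * Real.sin θ))
      = (∫ θ in (0:ℝ)..π, Real.cos (x * Real.sin θ))
        - (∫ θ in (0:ℝ)..π, Real.cos (θ - x * Real.sin θ)) / x
        + (∫ θ in (0:ℝ)..π, Real.cos (θ - x * Real.sin θ) * (1 - x * Real.cos θ)) / x := by
    rw [← intervalIntegral.integral_div, ← intervalIntegral.integral_div,
      ← intervalIntegral.integral_sub i1 i2, ← intervalIntegral.integral_add (i1.sub i2) i3]
    exact intervalIntegral.integral_congr fun θ _ => e1 θ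
  rw [split, besselJ1_aux x]
  unfold besselJ0 besselJ1
  field_simp
  ring

lemma upos {k : ℝ} (hk : k ^ 2 < 1) (θ : ℝ) : 0 < 1 - k ^ 2 * Real.sin θ ^ 2 := by
  nlinarith [Real.sin_sq_le_one θ, sq_nonneg k, sq_nonneg (Real.sin θ)]

lemma contu {k : ℝ} (hk : k ^ 2 < 1) (p : ℝ) :
    Continuous fun θ : ℝ => (1 - k ^ 2 * Real.sin θ ^ 2) ^ p := by
  apply Continuous.rpow_const (by fun_prop)
  intro θ; exact Or.inl (upos hk θ).ne'

lemma intu {k : ℝ} (hk : k ^ 2 < 1) (p : ℝ) :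
    IntervalIntegrable (fun θ : ℝ => (1 - k ^ 2 * Real.sin θ ^ 2) ^ p) volume 0 (π/2) :=
  (contu hk p).intervalIntegrable 0 (π/2)

lemma ball_sq_lt {x y : ℝ} (hx : 0 < x) (hx1 : x < 1)
    (hy : y ∈ Metric.ball x (min x ((1 - x)/2))) :
    0 < y ∧ y ≤ (1 + x)/2 ∧ y ^ 2 < 1 := by
  rw [Metric.mem_ball, Real.dist_eq, abs_lt] at hy
  obtain ⟨h1, h2⟩ := hy
  have hmin1 : min x ((1 - x)/2) ≤ x := min_le_left _ _
  have hmin2 : min x ((1 - x)/2) ≤ (1 - x)/2 := min_le_right _ _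
  refine ⟨by linarith, by linarith, by nlinarith⟩

lemma hasDerivAt_ellipticE {x : ℝ} (hx : 0 < x) (hx1 : x < 1) :
    HasDerivAt ellipticE ((ellipticE x - ellipticK x) / x) x := by
  have hx2 : x ^ 2 < 1 := by nlinarith
  set b : ℝ := (1 + x)/2 with hb
  have hb1 : b < 1 := by rw [hb]; linarith
  have hb0 : 0 < b := by rw [hb]; linarith
  have hbb : 0 < 1 - b ^ 2 := by nlinarith
  have hε : 0 < min x ((1 - x)/2) := lt_min hx (by linarith)
  have key : HasDerivAt (fun y => ∫ θ in (0:ℝ)..(π/2), (1 - y ^ 2 * Real.sin θ ^ 2) ^ ((1:ℝ)/2))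
      (∫ θ in (0:ℝ)..(π/2),
        -(2 * x * Real.sin θ ^ 2) * ((1:ℝ)/2) * (1 - x ^ 2 * Real.sin θ ^ 2) ^ ((1:ℝ)/2 - 1)) x := by
    have := (intervalIntegral.hasDerivAt_integral_of_dominated_loc_of_deriv_le
      (F := fun y θ => (1 - y ^ 2 * Real.sin θ ^ 2) ^ ((1:ℝ)/2))
      (F' := fun y θ => -(2 * y * Real.sin θ ^ 2) * ((1:ℝ)/2)
        * (1 - y ^ 2 * Real.sin θ ^ 2) ^ ((1:ℝ)/2 - 1))
      (x₀ := x) (a := 0) (b := π/2) (bound := fun _ => (1 - b ^ 2) ^ ((1:ℝ)/2 - 1))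
      (μ := volume) (s := Metric.ball x (min x ((1 - x)/2))) (Metric.ball_mem_nhds x hε) ?_ ?_ ?_ ?_ ?_ ?_).2
    · exact this
    · filter_upwards [Metric.ball_mem_nhds x hε] with y hy
      obtain ⟨_, _, hy2⟩ := ball_sq_lt hx hx1 hy
      exact (contu hy2 _).aestronglyMeasurable
    · exact (contu hx2 _).intervalIntegrable 0 (π/2)
    · apply Continuous.aestronglyMeasurable
      exact (by fun_prop : Continuous fun θ : ℝ => -(2 * x * Real.sin θ ^ 2) * ((1:ℝ)/2)).mul
        (contu hx2 _)
    · filter_upwards with θ _ y hy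
      obtain ⟨hy0, hyb, hy2⟩ := ball_sq_lt hx hx1 hy
      have hu : 0 < 1 - y ^ 2 * Real.sin θ ^ 2 := upos hy2 θ
      have hs : Real.sin θ ^ 2 ≤ 1 := Real.sin_sq_le_one θ
      have hrle : (1 - y ^ 2 * Real.sin θ ^ 2) ^ ((1:ℝ)/2 - 1) ≤ (1 - b ^ 2) ^ ((1:ℝ)/2 - 1) := by
        apply Real.rpow_le_rpow_of_nonpos hbb
        · nlinarith [sq_nonneg (Real.sin θ)]
        · norm_num
      have hr0 : (0:ℝ) ≤ (1 - y ^ 2 * Real.sin θ ^ 2) ^ ((1:ℝ)/2 - 1) :=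
        Real.rpow_nonneg hu.le _
      have e : -(2 * y * Real.sin θ ^ 2) * ((1:ℝ)/2) * (1 - y ^ 2 * Real.sin θ ^ 2) ^ ((1:ℝ)/2 - 1)
          = -(y * Real.sin θ ^ 2 * (1 - y ^ 2 * Real.sin θ ^ 2) ^ ((1:ℝ)/2 - 1)) := by ring
      rw [e, norm_neg, Real.norm_eq_abs, abs_of_nonneg (by positivity)]
      have h1 : y * Real.sin θ ^ 2 ≤ 1 := by nlinarith
      nlinarith [Real.rpow_nonneg hbb.le ((1:ℝ)/2 - 1), sq_nonneg (Real.sin θ),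
        mul_le_mul h1 hrle hr0 zero_le_one]
    · exact intervalIntegrable_const
    · filter_upwards with θ _ y hy
      obtain ⟨hy0, hyb, hy2⟩ := ball_sq_lt hx hx1 hy
      have hu : 0 < 1 - y ^ 2 * Real.sin θ ^ 2 := upos hy2 θ
      have hin : HasDerivAt (fun y : ℝ => 1 - y ^ 2 * Real.sin θ ^ 2)
          (-(2 * y * Real.sin θ ^ 2)) y := by
        have := ((hasDerivAt_pow 2 y).mul_const (Real.sin θ ^ 2)).const_sub 1
        refine this.congr_deriv (Eq.symm ?_)
        push_cast; ring
      have := hin.rpow_const (p := (1:ℝ)/2) (Or.inl hu.ne')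
      convert this using 1
  have heq : (∫ θ in (0:ℝ)..(π/2),
      -(2 * x * Real.sin θ ^ 2) * ((1:ℝ)/2) * (1 - x ^ 2 * Real.sin θ ^ 2) ^ ((1:ℝ)/2 - 1))
      = (ellipticE x - ellipticK x) / x := by
    have hptwise : ∀ θ : ℝ,
        -(2 * x * Real.sin θ ^ 2) * ((1:ℝ)/2) * (1 - x ^ 2 * Real.sin θ ^ 2) ^ ((1:ℝ)/2 - 1)
        = ((1 - x ^ 2 * Real.sin θ ^ 2) ^ ((1:ℝ)/2)
            - (1 - x ^ 2 * Real.sin θ ^ 2) ^ (-(1:ℝ)/2)) / x := by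
      intro θ
      have hu : 0 < 1 - x ^ 2 * Real.sin θ ^ 2 := upos hx2 θ
      have hA : (1 - x ^ 2 * Real.sin θ ^ 2) ^ ((1:ℝ)/2 - 1)
          = (1 - x ^ 2 * Real.sin θ ^ 2) ^ (-(1:ℝ)/2) := by norm_num
      have hB : (1 - x ^ 2 * Real.sin θ ^ 2) ^ ((1:ℝ)/2)
          = (1 - x ^ 2 * Real.sin θ ^ 2) * (1 - x ^ 2 * Real.sin θ ^ 2) ^ (-(1:ℝ)/2) := by
        rw [show ((1:ℝ)/2) = 1 + (-(1:ℝ)/2) by norm_num, Real.rpow_add hu, Real.rpow_one]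
      rw [hA, hB]
      field_simp
      ring
    rw [intervalIntegral.integral_congr (g := fun θ =>
        ((1 - x ^ 2 * Real.sin θ ^ 2) ^ ((1:ℝ)/2)
          - (1 - x ^ 2 * Real.sin θ ^ 2) ^ (-(1:ℝ)/2)) / x) (fun θ _ => hptwise θ)]
    rw [intervalIntegral.integral_div, intervalIntegral.integral_sub (intu hx2 _) (intu hx2 _)]
    rfl
  rw [heq] at key
  exact key

lemma I3_eq {x : ℝ} (hx : 0 < x) (hx1 : x < 1) :
    ∫ θ in (0:ℝ)..(π/2), (1 - x ^ 2 * Real.sin θ ^ 2) ^ (-(3:ℝ)/2)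
      = ellipticE x / (1 - x ^ 2) := by
  have hx2 : x ^ 2 < 1 := by nlinarith
  have hx2' : (0:ℝ) < 1 - x ^ 2 := by nlinarith
  set G : ℝ → ℝ := fun θ =>
    ((1 - x ^ 2 * Real.sin θ ^ 2) ^ ((1:ℝ)/2)
      - (1 - x ^ 2) * (1 - x ^ 2 * Real.sin θ ^ 2) ^ (-(3:ℝ)/2)) / x ^ 2 with hG
  have hderiv : ∀ θ ∈ Set.uIcc (0:ℝ) (π/2),
      HasDerivAt (fun θ => Real.sin θ * Real.cos θ
        * (1 - x ^ 2 * Real.sin θ ^ 2) ^ (-(1:ℝ)/2)) (G θ) θ := by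
    intro θ _
    have hu : 0 < 1 - x ^ 2 * Real.sin θ ^ 2 := upos hx2 θ
    have hin : HasDerivAt (fun θ : ℝ => 1 - x ^ 2 * Real.sin θ ^ 2)
        (-(x ^ 2 * (2 * Real.sin θ * Real.cos θ))) θ := by
      have := (((Real.hasDerivAt_sin θ).pow 2).const_mul (x ^ 2)).const_sub 1
      refine this.congr_deriv (Eq.symm ?_)
      push_cast; ring
    have hr := hin.rpow_const (p := -(1:ℝ)/2) (Or.inl hu.ne')
    have hprod := ((Real.hasDerivAt_sin θ).mul (Real.hasDerivAt_cos θ)).mul hr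
    refine hprod.congr_deriv (Eq.symm ?_)
    set u := 1 - x ^ 2 * Real.sin θ ^ 2 with hu'
    have hA : u ^ (-(1:ℝ)/2 - 1) = u ^ (-(3:ℝ)/2) := by norm_num
    have hB : u ^ (-(1:ℝ)/2) = u * u ^ (-(3:ℝ)/2) := by
      rw [show (-(1:ℝ)/2) = 1 + (-(3:ℝ)/2) by norm_num, Real.rpow_add hu, Real.rpow_one]
    have hC : u ^ ((1:ℝ)/2) = u ^ 2 * u ^ (-(3:ℝ)/2) := by
      rw [show ((1:ℝ)/2) = 2 + (-(3:ℝ)/2) by norm_num, Real.rpow_add hu]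
      norm_num [Real.rpow_two]
    simp only [hG, Pi.mul_apply]
    rw [← hu', hA, hB, hC]
    have hcs : Real.cos θ ^ 2 = 1 - Real.sin θ ^ 2 := by
      nlinarith [Real.sin_sq_add_cos_sq θ]
    rw [div_eq_iff (pow_ne_zero 2 hx.ne'), hu']
    linear_combination (-(x ^ 2 * (1 - x ^ 2 * Real.sin θ ^ 2) ^ (-(3:ℝ)/2))) * hcs
  have hGcont : Continuous G := by
    rw [hG]
    exact ((contu hx2 ((1:ℝ)/2)).sub (continuous_const.mul (contu hx2 (-(3:ℝ)/2)))).div_const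
      (x ^ 2)
  have hGint : IntervalIntegrable G volume 0 (π/2) := hGcont.intervalIntegrable 0 (π/2)
  have hzero : (∫ θ in (0:ℝ)..(π/2), G θ) = 0 := by
    rw [intervalIntegral.integral_eq_sub_of_hasDerivAt hderiv hGint]
    simp
  have hpt : ∀ θ : ℝ, (1 - x ^ 2 * Real.sin θ ^ 2) ^ (-(3:ℝ)/2)
      = ((1 - x ^ 2 * Real.sin θ ^ 2) ^ ((1:ℝ)/2) - x ^ 2 * G θ) / (1 - x ^ 2) := by
    intro θ
    rw [hG]
    field_simp
    ring
  rw [intervalIntegral.integral_congr (g := fun θ =>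
      ((1 - x ^ 2 * Real.sin θ ^ 2) ^ ((1:ℝ)/2) - x ^ 2 * G θ) / (1 - x ^ 2))
      (fun θ _ => hpt θ)]
  rw [intervalIntegral.integral_div,
    intervalIntegral.integral_sub (intu hx2 _) (hGint.const_mul (x ^ 2)),
    intervalIntegral.integral_const_mul, hzero]
  rw [show ellipticE x = ∫ θ in (0:ℝ)..(π/2), (1 - x ^ 2 * Real.sin θ ^ 2) ^ ((1:ℝ)/2) from rfl]
  ring

lemma hasDerivAt_ellipticK {x : ℝ} (hx : 0 < x) (hx1 : x < 1) :
    HasDerivAt ellipticK ((ellipticE x / (1 - x ^ 2) - ellipticK x) / x) x := by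
  have hx2 : x ^ 2 < 1 := by nlinarith
  set b : ℝ := (1 + x)/2 with hb
  have hb1 : b < 1 := by rw [hb]; linarith
  have hb0 : 0 < b := by rw [hb]; linarith
  have hbb : 0 < 1 - b ^ 2 := by nlinarith
  have hε : 0 < min x ((1 - x)/2) := lt_min hx (by linarith)
  have key : HasDerivAt (fun y => ∫ θ in (0:ℝ)..(π/2), (1 - y ^ 2 * Real.sin θ ^ 2) ^ (-(1:ℝ)/2))
      (∫ θ in (0:ℝ)..(π/2),
        -(2 * x * Real.sin θ ^ 2) * (-(1:ℝ)/2) * (1 - x ^ 2 * Real.sin θ ^ 2) ^ (-(1:ℝ)/2 - 1)) x := by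
    have := (intervalIntegral.hasDerivAt_integral_of_dominated_loc_of_deriv_le
      (F := fun y θ => (1 - y ^ 2 * Real.sin θ ^ 2) ^ (-(1:ℝ)/2))
      (F' := fun y θ => -(2 * y * Real.sin θ ^ 2) * (-(1:ℝ)/2)
        * (1 - y ^ 2 * Real.sin θ ^ 2) ^ (-(1:ℝ)/2 - 1))
      (x₀ := x) (a := 0) (b := π/2) (bound := fun _ => (1 - b ^ 2) ^ (-(1:ℝ)/2 - 1))
      (μ := volume) (s := Metric.ball x (min x ((1 - x)/2))) (Metric.ball_mem_nhds x hε) ?_ ?_ ?_ ?_ ?_ ?_).2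
    · exact this
    · filter_upwards [Metric.ball_mem_nhds x hε] with y hy
      obtain ⟨_, _, hy2⟩ := ball_sq_lt hx hx1 hy
      exact (contu hy2 _).aestronglyMeasurable
    · exact (contu hx2 _).intervalIntegrable 0 (π/2)
    · apply Continuous.aestronglyMeasurable
      exact (by fun_prop : Continuous fun θ : ℝ => -(2 * x * Real.sin θ ^ 2) * (-(1:ℝ)/2)).mul
        (contu hx2 _)
    · filter_upwards with θ _ y hy
      obtain ⟨hy0, hyb, hy2⟩ := ball_sq_lt hx hx1 hy
      have hu : 0 < 1 - y ^ 2 * Real.sin θ ^ 2 := upos hy2 θ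
      have hs : Real.sin θ ^ 2 ≤ 1 := Real.sin_sq_le_one θ
      have hrle : (1 - y ^ 2 * Real.sin θ ^ 2) ^ (-(1:ℝ)/2 - 1) ≤ (1 - b ^ 2) ^ (-(1:ℝ)/2 - 1) := by
        apply Real.rpow_le_rpow_of_nonpos hbb
        · nlinarith [sq_nonneg (Real.sin θ)]
        · norm_num
      have hr0 : (0:ℝ) ≤ (1 - y ^ 2 * Real.sin θ ^ 2) ^ (-(1:ℝ)/2 - 1) :=
        Real.rpow_nonneg hu.le _
      have e : -(2 * y * Real.sin θ ^ 2) * (-(1:ℝ)/2) * (1 - y ^ 2 * Real.sin θ ^ 2) ^ (-(1:ℝ)/2 - 1)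
          = y * Real.sin θ ^ 2 * (1 - y ^ 2 * Real.sin θ ^ 2) ^ (-(1:ℝ)/2 - 1) := by ring
      rw [e, Real.norm_eq_abs, abs_of_nonneg (by positivity)]
      have h1 : y * Real.sin θ ^ 2 ≤ 1 := by nlinarith
      nlinarith [Real.rpow_nonneg hbb.le (-(1:ℝ)/2 - 1), sq_nonneg (Real.sin θ),
        mul_le_mul h1 hrle hr0 zero_le_one]
    · exact intervalIntegrable_const
    · filter_upwards with θ _ y hy
      obtain ⟨hy0, hyb, hy2⟩ := ball_sq_lt hx hx1 hy
      have hu : 0 < 1 - y ^ 2 * Real.sin θ ^ 2 := upos hy2 θ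
      have hin : HasDerivAt (fun y : ℝ => 1 - y ^ 2 * Real.sin θ ^ 2)
          (-(2 * y * Real.sin θ ^ 2)) y := by
        have := ((hasDerivAt_pow 2 y).mul_const (Real.sin θ ^ 2)).const_sub 1
        refine this.congr_deriv (Eq.symm ?_)
        push_cast; ring
      have := hin.rpow_const (p := -(1:ℝ)/2) (Or.inl hu.ne')
      convert this using 1
  have heq : (∫ θ in (0:ℝ)..(π/2),
      -(2 * x * Real.sin θ ^ 2) * (-(1:ℝ)/2) * (1 - x ^ 2 * Real.sin θ ^ 2) ^ (-(1:ℝ)/2 - 1))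
      = (ellipticE x / (1 - x ^ 2) - ellipticK x) / x := by
    have hptwise : ∀ θ : ℝ,
        -(2 * x * Real.sin θ ^ 2) * (-(1:ℝ)/2) * (1 - x ^ 2 * Real.sin θ ^ 2) ^ (-(1:ℝ)/2 - 1)
        = ((1 - x ^ 2 * Real.sin θ ^ 2) ^ (-(3:ℝ)/2)
            - (1 - x ^ 2 * Real.sin θ ^ 2) ^ (-(1:ℝ)/2)) / x := by
      intro θ
      have hu : 0 < 1 - x ^ 2 * Real.sin θ ^ 2 := upos hx2 θ
      have hA : (1 - x ^ 2 * Real.sin θ ^ 2) ^ (-(1:ℝ)/2 - 1)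
          = (1 - x ^ 2 * Real.sin θ ^ 2) ^ (-(3:ℝ)/2) := by norm_num
      have hB : (1 - x ^ 2 * Real.sin θ ^ 2) ^ (-(1:ℝ)/2)
          = (1 - x ^ 2 * Real.sin θ ^ 2) * (1 - x ^ 2 * Real.sin θ ^ 2) ^ (-(3:ℝ)/2) := by
        rw [show (-(1:ℝ)/2) = 1 + (-(3:ℝ)/2) by norm_num, Real.rpow_add hu, Real.rpow_one]
      rw [hA, hB]
      field_simp
      ring
    rw [intervalIntegral.integral_congr (g := fun θ =>
        ((1 - x ^ 2 * Real.sin θ ^ 2) ^ (-(3:ℝ)/2)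
          - (1 - x ^ 2 * Real.sin θ ^ 2) ^ (-(1:ℝ)/2)) / x) (fun θ _ => hptwise θ)]
    rw [intervalIntegral.integral_div, intervalIntegral.integral_sub (intu hx2 _) (intu hx2 _),
      I3_eq hx hx1]
    rfl
  rw [heq] at key
  exact key

end Aux

/-- `∫ (x³/(1−x²))·J₀(x)·E(x) dx = J₀(x)·(K(x) − E(x)) − x·J₁(x)·E(x)`
for `0 < x < 1`. -/
theorem stmt_19 :
    ∀ x : ℝ, 0 < x → x < 1 →
      HasDerivAt
        (fun t => besselJ0 t * (ellipticK t - ellipticE t) - t * besselJ1 t * ellipticE t)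
        (x ^ 3 / (1 - x ^ 2) * besselJ0 x * ellipticE x) x := by
  intro x hx hx1
  have hxne : x ≠ 0 := hx.ne'
  have hx2 : (0:ℝ) < 1 - x ^ 2 := by nlinarith
  have hJ0 := hasDerivAt_besselJ0 x hxne
  have hJ1 := hasDerivAt_besselJ1 x hxne
  have hK := hasDerivAt_ellipticK hx hx1
  have hE := hasDerivAt_ellipticE hx hx1
  have h := (hJ0.mul (hK.sub hE)).sub (((hasDerivAt_id x).mul hJ1).mul hE)
  refine h.congr_deriv (Eq.symm ?_)
  simp only [Pi.mul_apply, Pi.sub_apply, id]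
  field_simp
  ring
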